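/- Let S be a group and T a subgroup of S. Then the closure T̄ of T under ∼_s is the (normal) subgroup of S generated by T and the commutator subgroup [S,S]. -/

import Mathlib

open scoped Pointwise


/-- `s ∼ₛ¹ t`: `s = p₁⋯pₙ` and `t = p_{f(1)}⋯p_{f(n)}` for some `p_i ∈ S¹` and a
permutation `f` of `{1,…,n}` (encoded as a list permutation). -/
def SimS1 {S : Type*} [Semigroup S] (s t : S) : Prop :=
  ∃ l l' : List (WithOne S), l.Perm l' ∧ (s : WithOne S) = l.prod ∧ (t : WithOne S) = l'.prod

/-- `∼ₛ`: the transitive closure of `∼ₛ¹`. -/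
def SimS {S : Type*} [Semigroup S] : S → S → Prop := Relation.TransGen SimS1

lemma simS1_symm {S : Type*} [Semigroup S] {s t : S} (h : SimS1 s t) : SimS1 t s := by
  obtain ⟨l, l', hp, hs, ht⟩ := h
  exact ⟨l', l, hp.symm, ht, hs⟩

lemma simS_symm {S : Type*} [Semigroup S] {s t : S} (h : SimS s t) : SimS t s := by
  induction h with
  | single h => exact Relation.TransGen.single (simS1_symm h)
  | tail _ h ih => exact Relation.TransGen.head (simS1_symm h) ih

lemma simS_abel {S : Type*} [Group S] {s t : S} (h : SimS s t) :
    Abelianization.of s = Abelianization.of t := by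
  set φ : WithOne S →* Abelianization S :=
    WithOne.lift (Abelianization.of : S →* Abelianization S).toMulHom
  have key : ∀ {a b : S}, SimS1 a b → Abelianization.of a = Abelianization.of b := by
    rintro a b ⟨l, l', hp, ha, hb⟩
    have : φ a = φ b := by
      rw [ha, hb, map_list_prod, map_list_prod]
      exact ((hp.map φ).prod_eq)
    simpa [φ, WithOne.lift_coe] using this
  induction h with
  | single h => exact key h
  | tail _ h ih => exact ih.trans (key h)

lemma simS_mul_commutator {S : Type*} [Group S] {c : S} (hc : c ∈ commutator S) (t : S) :
    SimS (t * c) t := by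
  rw [commutator_eq_closure] at hc
  induction hc using Subgroup.closure_induction generalizing t with
  | mem x hx =>
    obtain ⟨a, b, rfl⟩ := hx
    refine Relation.TransGen.single ?_
    refine ⟨[(t : WithOne S), a, b, a⁻¹, b⁻¹], [(t : WithOne S), a, a⁻¹, b, b⁻¹], ?_, ?_, ?_⟩
    · exact (List.Perm.swap (a⁻¹ : WithOne S) (b : WithOne S) _).cons _ |>.cons _
    · simp only [List.prod_cons, List.prod_nil, mul_one, ← WithOne.coe_mul, ← WithOne.coe_inv, WithOne.coe_inj]
      group
    · simp only [List.prod_cons, List.prod_nil, mul_one, ← WithOne.coe_mul, ← WithOne.coe_inv, WithOne.coe_inj]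
      group
  | one => simpa [SimS] using Relation.TransGen.single (⟨[(t : WithOne S)], [(t : WithOne S)], List.Perm.refl _, by simp, by simp⟩ : SimS1 t t)
  | mul x y _ _ hx hy =>
    have h1 : SimS (t * (x * y)) (t * x) := by
      have := hy (t * x); rwa [mul_assoc] at this
    exact h1.trans (hx t)
  | inv x _ hx =>
    have := hx (t * x⁻¹)
    rw [inv_mul_cancel_right] at this
    exact simS_symm this

/-- In a group `S`, the `∼ₛ`-closure of a subgroup `T` is the subgroup generated by
`T` and the commutator subgroup `[S,S]`. -/
theorem simS_closure_subgroup {S : Type*} [Group S] (T : Subgroup S) :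
    {s : S | ∃ t ∈ T, SimS s t} = (T ⊔ commutator S : Subgroup S) := by
  ext s
  constructor
  · rintro ⟨t, ht, hst⟩
    have h := simS_abel hst
    have hker : t⁻¹ * s ∈ commutator S := by
      rw [← QuotientGroup.eq_one_iff]
      have : Abelianization.of (t⁻¹ * s) = 1 := by
        rw [map_mul, map_inv, h, inv_mul_cancel]
      exact this
    have : s = t * (t⁻¹ * s) := by group
    rw [this]
    exact Subgroup.mul_mem _ (Subgroup.mem_sup_left ht) (Subgroup.mem_sup_right hker)
  · intro hs
    have : s ∈ ((T : Set S) * (commutator S : Set S)) := by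
      rwa [Subgroup.mul_normal T (commutator S)] at hs
    obtain ⟨t, ht, c, hc, rfl⟩ := this
    exact ⟨t, ht, simS_mul_commutator hc t⟩
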